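/- Let B₁ and B₂ be simple skew left braces and α : (B₂,∘) → Aut(B₁,+,∘) a non-trivial group homomorphism such that for every a ∈ B₂ with a ≠ 0, the map α_a is not an inner automorphism of the group (B₁,∘) (i.e. α_a ≠ i_g for every g ∈ B₁, where i_g(h) := g⁻ ∘ h ∘ g). Suppose moreover that B₁ is not a trivial skew left brace. Then the semidirect product B₁ ⋊_α B₂ is strongly prime and is not simple. -/

import Mathlib

/-- A *skew left brace* is a set with two group structures `(B,+)` and `(B,∘)`
(the latter written multiplicatively) satisfying `a∘(b+c) = a∘b - a + a∘c`.
The two identity elements automatically coincide. -/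
class SkewLeftBrace (B : Type*) extends AddGroup B, Group B where
  mul_add_eq : ∀ a b c : B, a * (b + c) = a * b - a + a * c

namespace SkewLeftBrace

variable {B : Type*} [SkewLeftBrace B]

/-- The map `λ_a : b ↦ -a + a∘b`. -/
def lmap (a b : B) : B := -a + a * b

/-- The brace star operation `a*b := -a + a∘b - b`. -/
def bstar (a b : B) : B := -a + a * b - b

/-- `X*Y`: the additive subgroup generated by all `bstar x y`, `x ∈ X`, `y ∈ Y`,
regarded as a set. -/
def setStar (X Y : Set B) : Set B :=
  ↑(AddSubgroup.closure {z : B | ∃ x ∈ X, ∃ y ∈ Y, z = bstar x y})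

/-- Pointwise sum of two subsets. -/
def setSum (X Y : Set B) : Set B := {w : B | ∃ x ∈ X, ∃ y ∈ Y, w = x + y}

/-- `X^Z := {z + x - z : x ∈ X, z ∈ Z}`. -/
def setConj (X Z : Set B) : Set B := {w : B | ∃ x ∈ X, ∃ z ∈ Z, w = z + x + -z}

/-- An ideal of a skew left brace: a subgroup of `(B,+)` which is normal in both
`(B,+)` and `(B,∘)` and invariant under all the maps `λ_a`. -/
structure IsIdeal (I : Set B) : Prop where
  zero_mem : (0 : B) ∈ I
  add_mem : ∀ ⦃x y : B⦄, x ∈ I → y ∈ I → x + y ∈ I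
  neg_mem : ∀ ⦃x : B⦄, x ∈ I → -x ∈ I
  add_conj_mem : ∀ (b : B) ⦃x : B⦄, x ∈ I → b + x + -b ∈ I
  mul_mem : ∀ ⦃x y : B⦄, x ∈ I → y ∈ I → x * y ∈ I
  inv_mem : ∀ ⦃x : B⦄, x ∈ I → x⁻¹ ∈ I
  mul_conj_mem : ∀ (b : B) ⦃x : B⦄, x ∈ I → b * x * b⁻¹ ∈ I
  lmap_mem : ∀ (a : B) ⦃x : B⦄, x ∈ I → lmap a x ∈ I

/-- A minimal ideal: a nonzero ideal whose only sub-ideals are `{0}` and itself. -/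
def IsMinimalIdeal (I : Set B) : Prop :=
  IsIdeal I ∧ I ≠ {0} ∧ ∀ J : Set B, IsIdeal J → J ⊆ I → J = {0} ∨ J = I

theorem mul_zero' (a : B) : a * (0 : B) = a := by
  have h := SkewLeftBrace.mul_add_eq a (0 : B) (0 : B)
  rw [add_zero] at h
  have h2 : a * (0:B) - a = 0 := (right_eq_add.mp h)
  exact sub_eq_zero.mp h2

theorem zero_eq_one : (0 : B) = 1 := by
  have h := mul_zero' (1 : B)
  rw [one_mul] at h
  exact h

theorem IsIdeal.one_mem {I : Set B} (h : IsIdeal I) : (1 : B) ∈ I :=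
  (zero_eq_one (B := B)) ▸ h.zero_mem

variable (B) in
/-- A skew left brace is *semiprime* if `I*I ≠ {0}` for every nonzero ideal `I`. -/
def Semiprime : Prop := ∀ I : Set B, IsIdeal I → I ≠ {0} → setStar I I ≠ {0}

variable (B) in
/-- A skew left brace is *prime*... (and) *simple* if its only ideals are `{0}` and `B`,
and these are distinct. -/
def Simple : Prop :=
  ({0} : Set B) ≠ Set.univ ∧ ∀ I : Set B, IsIdeal I → I = {0} ∨ I = Set.univ

variable (B) in
/-- A skew left brace is *Artinian* if every descending chain of ideals stabilizes. -/
def Artinian : Prop :=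
  ∀ f : ℕ → Set B, (∀ n, IsIdeal (f n)) → (∀ n, f (n + 1) ⊆ f n) →
    ∃ N, ∀ n, N ≤ n → f n = f N

/-- The `*`-products of copies of a fixed set `I`. -/
inductive IsStarPowerOf (I : Set B) : Set B → Prop
  | base : IsStarPowerOf I I
  | star {X Y : Set B} : IsStarPowerOf I X → IsStarPowerOf I Y →
      IsStarPowerOf I (setStar X Y)

variable (B) in
/-- A skew left brace is *strongly semiprime* if for every nonzero ideal `I`, every
`*`-product of copies of `I` is nonzero. -/
def StronglySemiprime : Prop :=
  ∀ I : Set B, IsIdeal I → I ≠ {0} → ∀ X : Set B, IsStarPowerOf I X → X ≠ {0}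

/-- The `*`-products of nonzero ideals. -/
inductive IsStarProdOfNonzeroIdeals : Set B → Prop
  | ideal {I : Set B} : IsIdeal I → I ≠ {0} → IsStarProdOfNonzeroIdeals I
  | star {X Y : Set B} : IsStarProdOfNonzeroIdeals X → IsStarProdOfNonzeroIdeals Y →
      IsStarProdOfNonzeroIdeals (setStar X Y)

variable (B) in
/-- A skew left brace is *strongly prime* if every `*`-product of nonzero ideals is nonzero. -/
def StronglyPrime : Prop :=
  ∀ X : Set B, IsStarProdOfNonzeroIdeals X → X ≠ {0}

end SkewLeftBrace
namespace SkewLeftBrace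

variable {B : Type*} [SkewLeftBrace B]

/-- An ideal, regarded as a skew left brace with the restricted operations. -/
def IsIdeal.brace {I : Set B} (h : IsIdeal I) : SkewLeftBrace I :=
  letI : Zero I := ⟨⟨0, h.zero_mem⟩⟩
  letI : Add I := ⟨fun x y => ⟨x.1 + y.1, h.add_mem x.2 y.2⟩⟩
  letI : Neg I := ⟨fun x => ⟨-x.1, h.neg_mem x.2⟩⟩
  letI : One I := ⟨⟨1, h.one_mem⟩⟩
  letI : Mul I := ⟨fun x y => ⟨x.1 * y.1, h.mul_mem x.2 y.2⟩⟩
  letI : Inv I := ⟨fun x => ⟨x.1⁻¹, h.inv_mem x.2⟩⟩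
  { add := (· + ·)
    zero := 0
    neg := (- ·)
    nsmul := nsmulRec
    zsmul := zsmulRec
    add_assoc := fun a b c => Subtype.ext (add_assoc a.1 b.1 c.1)
    zero_add := fun a => Subtype.ext (zero_add a.1)
    add_zero := fun a => Subtype.ext (add_zero a.1)
    neg_add_cancel := fun a => Subtype.ext (neg_add_cancel a.1)
    mul := (· * ·)
    one := 1
    inv := (·⁻¹)
    npow := npowRec
    zpow := zpowRec
    mul_assoc := fun a b c => Subtype.ext (mul_assoc a.1 b.1 c.1)
    one_mul := fun a => Subtype.ext (one_mul a.1)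
    mul_one := fun a => Subtype.ext (mul_one a.1)
    inv_mul_cancel := fun a => Subtype.ext (inv_mul_cancel a.1)
    mul_add_eq := fun a b c =>
      Subtype.ext (by
        show a.1 * (b.1 + c.1) = a.1 * b.1 + -a.1 + a.1 * c.1
        rw [SkewLeftBrace.mul_add_eq, sub_eq_add_neg]) }

/-- The direct product of two skew left braces, with componentwise operations. -/
def prodBrace (B₁ B₂ : Type*) [SkewLeftBrace B₁] [SkewLeftBrace B₂] :
    SkewLeftBrace (B₁ × B₂) :=
  { (inferInstance : AddGroup (B₁ × B₂)), (inferInstance : Group (B₁ × B₂)) with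
    mul_add_eq := fun a b c =>
      Prod.ext (by simp [SkewLeftBrace.mul_add_eq]) (by simp [SkewLeftBrace.mul_add_eq]) }

/-- Two skew left braces are isomorphic if there is a bijection preserving `+` and `∘`. -/
def IsBraceIsomorphic (A C : Type*) [SkewLeftBrace A] [SkewLeftBrace C] : Prop :=
  ∃ f : A ≃ C, (∀ x y : A, f (x + y) = f x + f y) ∧ (∀ x y : A, f (x * y) = f x * f y)

/-- A group homomorphism from `(B₂,∘)` to the automorphism group `Aut(B₁,+,∘)` of the
skew left brace `B₁`, presented as an action `act : B₂ → B₁ → B₁` by skew left brace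
automorphisms. -/
structure BraceActionHom (B₂ B₁ : Type*) [SkewLeftBrace B₂] [SkewLeftBrace B₁] where
  act : B₂ → B₁ → B₁
  act_bijective : ∀ a : B₂, Function.Bijective (act a)
  act_add : ∀ (a : B₂) (x y : B₁), act a (x + y) = act a x + act a y
  act_mul : ∀ (a : B₂) (x y : B₁), act a (x * y) = act a x * act a y
  act_hom : ∀ (a b : B₂) (x : B₁), act (a * b) x = act a (act b x)
  act_one : ∀ x : B₁, act (1 : B₂) x = x

variable {B₁ B₂ : Type*} [SkewLeftBrace B₁] [SkewLeftBrace B₂]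

theorem BraceActionHom.act_one' (α : BraceActionHom B₂ B₁) (a : B₂) :
    α.act a (1 : B₁) = 1 := by
  have h := α.act_mul a 1 1
  rw [mul_one] at h
  exact mul_eq_left.mp h.symm

/-- The underlying type of the semidirect product of two skew left braces. -/
@[ext]
structure SDP (B₁ B₂ : Type*) where
  fst : B₁
  snd : B₂

/-- The semidirect product `B₁ ⋊_α B₂` of skew left braces: the additive group is the
direct product, while `(a₁,a₂) ∘ (b₁,b₂) = (a₁ ∘ α_{a₂}(b₁), a₂ ∘ b₂)`. -/
def BraceActionHom.sdp (α : BraceActionHom B₂ B₁) : SkewLeftBrace (SDP B₁ B₂) :=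
  letI : Zero (SDP B₁ B₂) := ⟨⟨0, 0⟩⟩
  letI : Add (SDP B₁ B₂) := ⟨fun p q => ⟨p.fst + q.fst, p.snd + q.snd⟩⟩
  letI : Neg (SDP B₁ B₂) := ⟨fun p => ⟨-p.fst, -p.snd⟩⟩
  letI : One (SDP B₁ B₂) := ⟨⟨1, 1⟩⟩
  letI : Mul (SDP B₁ B₂) := ⟨fun p q => ⟨p.fst * α.act p.snd q.fst, p.snd * q.snd⟩⟩
  letI : Inv (SDP B₁ B₂) := ⟨fun p => ⟨α.act p.snd⁻¹ p.fst⁻¹, p.snd⁻¹⟩⟩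
  { add := (· + ·)
    zero := 0
    neg := (- ·)
    nsmul := nsmulRec
    zsmul := zsmulRec
    add_assoc := fun a b c =>
      SDP.ext (add_assoc a.fst b.fst c.fst) (add_assoc a.snd b.snd c.snd)
    zero_add := fun a => SDP.ext (zero_add a.fst) (zero_add a.snd)
    add_zero := fun a => SDP.ext (add_zero a.fst) (add_zero a.snd)
    neg_add_cancel := fun a => SDP.ext (neg_add_cancel a.fst) (neg_add_cancel a.snd)
    mul := (· * ·)
    one := 1
    inv := (·⁻¹)
    npow := npowRec
    zpow := zpowRec
    mul_assoc := fun a b c =>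
      SDP.ext
        (by show (a.fst * α.act a.snd b.fst) * α.act (a.snd * b.snd) c.fst =
              a.fst * α.act a.snd (b.fst * α.act b.snd c.fst)
            rw [α.act_hom, α.act_mul, mul_assoc])
        (mul_assoc a.snd b.snd c.snd)
    one_mul := fun a =>
      SDP.ext (by show (1 : B₁) * α.act 1 a.fst = a.fst; rw [α.act_one, one_mul])
        (one_mul a.snd)
    mul_one := fun a =>
      SDP.ext (by show a.fst * α.act a.snd (1 : B₁) = a.fst; rw [α.act_one', mul_one])
        (mul_one a.snd)
    inv_mul_cancel := fun a =>
      SDP.ext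
        (by show α.act a.snd⁻¹ a.fst⁻¹ * α.act a.snd⁻¹ a.fst = 1
            rw [← α.act_mul, inv_mul_cancel, α.act_one'])
        (inv_mul_cancel a.snd)
    mul_add_eq := fun a b c =>
      SDP.ext
        (by show a.fst * α.act a.snd (b.fst + c.fst) =
              a.fst * α.act a.snd b.fst + -a.fst + a.fst * α.act a.snd c.fst
            rw [α.act_add, SkewLeftBrace.mul_add_eq, sub_eq_add_neg])
        (by show a.snd * (b.snd + c.snd) = a.snd * b.snd + -a.snd + a.snd * c.snd
            rw [SkewLeftBrace.mul_add_eq, sub_eq_add_neg]) }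

end SkewLeftBrace
namespace SkewLeftBrace

variable {B : Type*} [SkewLeftBrace B]

theorem mul_neg_eq' (a b : B) : a * (-b) = a - a * b + a := by
  have h := mul_add_eq a b (-b)
  rw [add_neg_cancel, mul_zero'] at h
  have h2 : a * b - a + a * (-b) = a := h.symm
  have key : a * b - a + (a - a * b + a) = a := by
    simp [sub_eq_add_neg, add_assoc, neg_add_cancel_left, add_neg_cancel_left]
  exact add_left_cancel (h2.trans key.symm)

theorem lmap_add' (a x y : B) : lmap a (x + y) = lmap a x + lmap a y := by
  simp [lmap, mul_add_eq, sub_eq_add_neg, add_assoc]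

theorem lmap_zero' (a : B) : lmap a (0 : B) = 0 := by
  simp [lmap, mul_zero']

theorem lmap_neg' (a x : B) : lmap a (-x) = -(lmap a x) := by
  have h := lmap_add' a x (-x)
  rw [add_neg_cancel, lmap_zero'] at h
  exact (neg_eq_of_add_eq_zero_right h.symm).symm

theorem lmap_lmap' (a b x : B) : lmap a (lmap b x) = lmap (a * b) x := by
  simp [lmap, mul_add_eq, mul_neg_eq', mul_assoc, sub_eq_add_neg, add_assoc]

theorem lmap_eq_bstar (a b : B) : lmap a b = bstar a b + b := by
  simp [bstar, lmap, sub_eq_add_neg, add_assoc]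

theorem mul_eq_add_lmap (a b : B) : a * b = a + lmap a b := by
  simp [lmap, add_neg_cancel_left]

theorem conj_bstar' (b a c : B) : b + bstar a c + -b = -(bstar a b) + bstar a (b + c) := by
  simp [bstar, mul_add_eq, sub_eq_add_neg, neg_add_rev, add_assoc]

theorem lmap_bstar' (a b c : B) :
    lmap a (bstar b c) = bstar (a * b) c - bstar a c := by
  have h1 : bstar b c = lmap b c - c := rfl
  rw [h1, sub_eq_add_neg, lmap_add', lmap_neg', lmap_lmap']
  rw [lmap_eq_bstar (a*b) c, lmap_eq_bstar a c]
  simp [sub_eq_add_neg, neg_add_rev, add_assoc]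

theorem inv_eq_brace (x : B) : x⁻¹ = -x + -(bstar x⁻¹ x) := by
  have h : bstar x⁻¹ x = -(x⁻¹) + 1 - x := by rw [bstar, inv_mul_cancel]
  rw [h, ← zero_eq_one]
  simp [sub_eq_add_neg, neg_add_rev, add_assoc]

theorem conj_mul_eq (b x : B) :
    b * x * b⁻¹ = b + (bstar b x + x) + -b + -(bstar (b * x * b⁻¹) b) := by
  set y := b * x * b⁻¹ with hy
  have h : y * b = b * x := by rw [hy, mul_assoc, inv_mul_cancel, mul_one]
  have h2 : y + (bstar y b + b) = b + (bstar b x + x) := by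
    rw [← lmap_eq_bstar, ← mul_eq_add_lmap, ← lmap_eq_bstar, ← mul_eq_add_lmap, h]
  rw [← h2]
  simp [add_assoc, add_neg_cancel_left]

theorem setStar_mono' {X X' Y Y' : Set B} (hX : X ⊆ X') (hY : Y ⊆ Y') :
    setStar X Y ⊆ setStar X' Y' := by
  intro z hz
  refine AddSubgroup.closure_mono ?_ hz
  rintro w ⟨x, hx, y, hy, rfl⟩
  exact ⟨x, hX hx, y, hY hy, rfl⟩

theorem isIdeal_setStar_univ : IsIdeal (setStar (Set.univ : Set B) Set.univ) := by
  set S : Set B := {z : B | ∃ x ∈ (Set.univ : Set B), ∃ y ∈ (Set.univ : Set B), z = bstar x y} with hS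
  have hgen : ∀ x y : B, bstar x y ∈ AddSubgroup.closure S :=
    fun x y => AddSubgroup.subset_closure ⟨x, trivial, y, trivial, rfl⟩
  have hconj : ∀ (b : B) ⦃x : B⦄, x ∈ AddSubgroup.closure S → b + x + -b ∈ AddSubgroup.closure S := by
    intro b x hx
    induction hx using AddSubgroup.closure_induction with
    | mem z hz =>
        obtain ⟨u, -, v, -, rfl⟩ := hz
        rw [conj_bstar']
        exact AddSubgroup.add_mem _ (AddSubgroup.neg_mem _ (hgen u b)) (hgen u (b + v))
    | zero => simpa using AddSubgroup.zero_mem _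
    | add u v hu hv ihu ihv =>
        have : b + (u + v) + -b = (b + u + -b) + (b + v + -b) := by
          simp [add_assoc, neg_add_cancel_left]
        rw [this]; exact AddSubgroup.add_mem _ ihu ihv
    | neg u hu ihu =>
        have : b + -u + -b = -(b + u + -b) := by
          simp [neg_add_rev, add_assoc]
        rw [this]; exact AddSubgroup.neg_mem _ ihu
  refine ⟨AddSubgroup.zero_mem _, fun x y hx hy => AddSubgroup.add_mem _ hx hy,
    fun x hx => AddSubgroup.neg_mem _ hx, hconj, ?_, ?_, ?_, ?_⟩
  · intro x y hx hy
    rw [mul_eq_add_lmap, lmap_eq_bstar]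
    exact AddSubgroup.add_mem _ hx (AddSubgroup.add_mem _ (hgen x y) hy)
  · intro x hx
    rw [inv_eq_brace]
    exact AddSubgroup.add_mem _ (AddSubgroup.neg_mem _ hx) (AddSubgroup.neg_mem _ (hgen x⁻¹ x))
  · intro b x hx
    rw [conj_mul_eq]
    refine AddSubgroup.add_mem _ (hconj b ?_) (AddSubgroup.neg_mem _ (hgen _ b))
    exact AddSubgroup.add_mem _ (hgen b x) hx
  · intro a x hx
    induction hx using AddSubgroup.closure_induction with
    | mem z hz =>
        obtain ⟨u, -, v, -, rfl⟩ := hz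
        rw [lmap_bstar']
        exact AddSubgroup.sub_mem _ (hgen (a*u) v) (hgen a v)
    | zero => rw [lmap_zero']; exact AddSubgroup.zero_mem (AddSubgroup.closure S)
    | add u v hu hv ihu ihv =>
        rw [lmap_add']; exact AddSubgroup.add_mem _ ihu ihv
    | neg u hu ihu =>
        rw [lmap_neg']; exact AddSubgroup.neg_mem _ ihu

end SkewLeftBrace
open SkewLeftBrace

/-- If `B₁`, `B₂` are simple, `α` is non-trivial, no `α_a` (for `a ≠ 0`) is an inner
automorphism of `(B₁,∘)`, and `B₁` is not a trivial skew left brace, then `B₁ ⋊_α B₂`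
is strongly prime and not simple. -/
theorem sdp_stronglyPrime_of_outer {B₁ B₂ : Type*} [SkewLeftBrace B₁] [SkewLeftBrace B₂]
    (h₁ : SkewLeftBrace.Simple B₁) (h₂ : SkewLeftBrace.Simple B₂)
    (α : BraceActionHom B₂ B₁)
    (hα : ∃ (a : B₂) (x : B₁), α.act a x ≠ x)
    (houter : ∀ a : B₂, a ≠ 0 → ∀ g : B₁, α.act a ≠ fun h => g⁻¹ * h * g)
    (hnontriv : ∃ a b : B₁, a * b ≠ a + b) :
    @SkewLeftBrace.StronglyPrime _ α.sdp ∧ ¬ @SkewLeftBrace.Simple _ α.sdp := by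
  letI : SkewLeftBrace (SDP B₁ B₂) := α.sdp
  have h01 : (0 : B₂) = 1 := zero_eq_one
  have h01' : (0 : B₁) = 1 := zero_eq_one
  -- component lemmas for the semidirect product operations
  have hadd : ∀ p q : SDP B₁ B₂, p + q = ⟨p.fst + q.fst, p.snd + q.snd⟩ := fun _ _ => rfl
  have hneg : ∀ p : SDP B₁ B₂, -p = ⟨-p.fst, -p.snd⟩ := fun _ => rfl
  have hmul : ∀ p q : SDP B₁ B₂, p * q = ⟨p.fst * α.act p.snd q.fst, p.snd * q.snd⟩ :=
    fun _ _ => rfl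
  have hinv : ∀ p : SDP B₁ B₂, p⁻¹ = ⟨α.act p.snd⁻¹ p.fst⁻¹, p.snd⁻¹⟩ := fun _ => rfl
  have hzero : (0 : SDP B₁ B₂) = ⟨0, 0⟩ := rfl
  -- embedding lemmas for elements of the form ⟨x, 0⟩
  have hemul : ∀ x y : B₁, (⟨x, 0⟩ : SDP B₁ B₂) * ⟨y, 0⟩ = ⟨x * y, 0⟩ := by
    intro x y; rw [hmul]; exact SDP.ext (by simp [h01, α.act_one]) (by simp [h01])
  have heinv : ∀ x : B₁, (⟨x, 0⟩ : SDP B₁ B₂)⁻¹ = ⟨x⁻¹, 0⟩ := by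
    intro x; rw [hinv]; exact SDP.ext (by simp [h01, α.act_one]) (by simp [h01])
  have hebstar : ∀ x y : B₁, bstar (⟨x, 0⟩ : SDP B₁ B₂) ⟨y, 0⟩ = ⟨bstar x y, 0⟩ := by
    intro x y
    rw [bstar, bstar, hemul, sub_eq_add_neg, sub_eq_add_neg, hneg, hneg, hadd, hadd]
    exact SDP.ext (by simp) (by simp)
  -- the ideal B₁ × {0}
  set J₁ : Set (SDP B₁ B₂) := {p | p.snd = 0} with hJ₁def
  have hJ₁mem : ∀ p : SDP B₁ B₂, p ∈ J₁ ↔ p.snd = 0 := fun _ => Iff.rfl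
  have hJ₁ideal : IsIdeal J₁ := by
    constructor
    · show (0 : SDP B₁ B₂).snd = 0; rw [hzero]
    · intro p q hp hq; show (p + q).snd = 0
      rw [hadd]; show p.snd + q.snd = 0; rw [hp, hq, add_zero]
    · intro p hp; show (-p).snd = 0
      rw [hneg]; show -p.snd = 0; rw [hp, neg_zero]
    · intro b p hp; show (b + p + -b).snd = 0
      rw [hadd, hneg, hadd]; show b.snd + p.snd + -b.snd = 0
      rw [hp, add_zero, add_neg_cancel]
    · intro p q hp hq; show (p * q).snd = 0
      rw [hmul]; show p.snd * q.snd = 0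
      rw [hp, hq, h01, mul_one]
    · intro p hp; show (p⁻¹).snd = 0
      rw [hinv]; show p.snd⁻¹ = 0; rw [hp, h01, inv_one]
    · intro b p hp; show (b * p * b⁻¹).snd = 0
      rw [hmul, hinv, hmul]
      show b.snd * p.snd * b.snd⁻¹ = 0
      rw [hp, h01, mul_one, mul_inv_cancel]
    · intro b p hp; show (lmap b p).snd = 0
      rw [lmap, hmul, hneg, hadd]
      show -b.snd + b.snd * p.snd = 0
      rw [hp, h01, mul_one, neg_add_cancel]
      exact h01
  -- every nonzero ideal contains J₁
  have claimA : ∀ J : Set (SDP B₁ B₂), IsIdeal J → J ≠ {0} → J₁ ⊆ J := by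
    intro J hJ hJne
    set I : Set B₁ := {x | (⟨x, 0⟩ : SDP B₁ B₂) ∈ J} with hIdef
    have hIideal : IsIdeal I := by
      constructor
      · show (⟨0, 0⟩ : SDP B₁ B₂) ∈ J; rw [← hzero]; exact hJ.zero_mem
      · intro x y hx hy
        have := hJ.add_mem hx hy
        rw [hadd] at this; show (⟨x + y, 0⟩ : SDP B₁ B₂) ∈ J; simpa using this
      · intro x hx
        have := hJ.neg_mem hx
        rw [hneg] at this; show (⟨-x, 0⟩ : SDP B₁ B₂) ∈ J; simpa using this
      · intro b x hx
        have := hJ.add_conj_mem (⟨b, 0⟩ : SDP B₁ B₂) hx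
        rw [hadd, hneg, hadd] at this; show (⟨b + x + -b, 0⟩ : SDP B₁ B₂) ∈ J; simpa using this
      · intro x y hx hy
        have := hJ.mul_mem hx hy
        rw [hemul] at this; exact this
      · intro x hx
        have := hJ.inv_mem hx
        rw [heinv] at this; exact this
      · intro b x hx
        have := hJ.mul_conj_mem (⟨b, 0⟩ : SDP B₁ B₂) hx
        rw [hemul, heinv, hemul] at this; exact this
      · intro a x hx
        have := hJ.lmap_mem (⟨a, 0⟩ : SDP B₁ B₂) hx
        rw [lmap, hemul, hneg, hadd] at this
        show (⟨lmap a x, 0⟩ : SDP B₁ B₂) ∈ J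
        rw [lmap]
        simpa using this
    have hIne : ∃ x ∈ I, x ≠ 0 := by
      by_cases hc : ∃ p ∈ J, p.snd ≠ 0
      · obtain ⟨p, hpJ, hps⟩ := hc
        obtain ⟨h, hh⟩ := Function.ne_iff.mp (houter p.snd hps p.fst)
        have hconj := hJ.mul_mem (hJ.mul_conj_mem (⟨h, 0⟩ : SDP B₁ B₂) hpJ) (hJ.inv_mem hpJ)
        have hq : (⟨h, 0⟩ : SDP B₁ B₂) * p * (⟨h, 0⟩ : SDP B₁ B₂)⁻¹ * p⁻¹ =
            ⟨h * p.fst * α.act p.snd h⁻¹ * p.fst⁻¹, 0⟩ := by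
          rw [hinv, hinv, hmul, hmul, hmul]
          refine SDP.ext ?_ ?_
          · show h * α.act 0 p.fst * α.act (0 * p.snd) (α.act 0⁻¹ h⁻¹) *
              α.act (0 * p.snd * 0⁻¹) (α.act p.snd⁻¹ p.fst⁻¹) =
              h * p.fst * α.act p.snd h⁻¹ * p.fst⁻¹
            simp [h01, α.act_one, ← α.act_hom]
          · show 0 * p.snd * 0⁻¹ * p.snd⁻¹ = 0
            simp [h01]
        rw [hq] at hconj
        refine ⟨h * p.fst * α.act p.snd h⁻¹ * p.fst⁻¹, hconj, ?_⟩
        intro he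
        apply hh
        rw [h01'] at he
        have hai : α.act p.snd h⁻¹ = (α.act p.snd h)⁻¹ := by
          have : α.act p.snd h⁻¹ * α.act p.snd h = 1 := by
            rw [← α.act_mul, inv_mul_cancel, α.act_one']
          exact eq_inv_of_mul_eq_one_left this
        rw [hai, mul_inv_eq_one, mul_inv_eq_iff_eq_mul] at he
        show α.act p.snd h = p.fst⁻¹ * h * p.fst
        rw [mul_assoc, he, inv_mul_cancel_left]
      · push_neg at hc
        have hex : ∃ p ∈ J, p ≠ 0 := by
          by_contra hno
          push_neg at hno
          apply hJne
          apply Set.eq_singleton_iff_unique_mem.mpr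
          exact ⟨hJ.zero_mem, fun p hp => hno p hp⟩
        obtain ⟨p, hpJ, hpne⟩ := hex
        refine ⟨p.fst, ?_, ?_⟩
        · show (⟨p.fst, 0⟩ : SDP B₁ B₂) ∈ J
          have : p = ⟨p.fst, 0⟩ := SDP.ext rfl (hc p hpJ)
          rwa [← this]
        · intro he
          apply hpne
          have : p = ⟨p.fst, 0⟩ := SDP.ext rfl (hc p hpJ)
          rw [this, he, ← hzero]
    have hIuniv : I = Set.univ := by
      rcases h₁.2 I hIideal with h | h
      · exfalso
        obtain ⟨x, hx, hxne⟩ := hIne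
        rw [h] at hx
        exact hxne hx
      · exact h
    intro p hp
    have hp0 : p.snd = 0 := hp
    have : p = ⟨p.fst, 0⟩ := SDP.ext rfl hp0
    rw [this]
    have : p.fst ∈ I := by rw [hIuniv]; trivial
    exact this
  -- B₁ * B₁ = B₁ by simplicity
  obtain ⟨u, v, huv⟩ := hnontriv
  have hbz : bstar u v ≠ 0 := by
    intro h
    apply huv
    have h' : -u + u * v - v = 0 := h
    rw [sub_eq_zero] at h'
    have := congrArg (u + ·) h'
    simpa [add_neg_cancel_left] using this
  have hT : setStar (Set.univ : Set B₁) Set.univ = Set.univ := by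
    rcases h₁.2 _ (isIdeal_setStar_univ (B := B₁)) with h | h
    · exfalso
      have : bstar u v ∈ setStar (Set.univ : Set B₁) Set.univ :=
        AddSubgroup.subset_closure ⟨u, trivial, v, trivial, rfl⟩
      rw [h] at this
      exact hbz this
    · exact h
  -- J₁ ⊆ J₁ * J₁
  have hall : ∀ t : B₁, t ∈ AddSubgroup.closure {z : B₁ | ∃ x ∈ (Set.univ : Set B₁),
      ∃ y ∈ (Set.univ : Set B₁), z = bstar x y} →
      (⟨t, 0⟩ : SDP B₁ B₂) ∈ setStar J₁ J₁ := by
    intro t hx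
    induction hx using AddSubgroup.closure_induction with
    | mem z hz =>
        obtain ⟨x, -, y, -, rfl⟩ := hz
        rw [← hebstar]
        exact AddSubgroup.subset_closure ⟨⟨x, 0⟩, rfl, ⟨y, 0⟩, rfl, rfl⟩
    | zero =>
        show (⟨0, 0⟩ : SDP B₁ B₂) ∈ _
        rw [← hzero]
        exact AddSubgroup.zero_mem _
    | add x y hx hy ihx ihy =>
        have : (⟨x + y, 0⟩ : SDP B₁ B₂) = ⟨x, 0⟩ + ⟨y, 0⟩ := by
          rw [hadd]; exact SDP.ext rfl (by rw [add_zero])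
        rw [this]
        exact AddSubgroup.add_mem _ ihx ihy
    | neg x hx ihx =>
        have : (⟨-x, 0⟩ : SDP B₁ B₂) = -(⟨x, 0⟩ : SDP B₁ B₂) := by
          rw [hneg]; exact SDP.ext rfl (by rw [neg_zero])
        rw [this]
        exact AddSubgroup.neg_mem _ ihx
  have hJ₁star : J₁ ⊆ setStar J₁ J₁ := by
    intro p hp
    have hp0 : p.snd = 0 := hp
    have hpe : p = ⟨p.fst, 0⟩ := SDP.ext rfl hp0
    rw [hpe]
    apply hall
    have : p.fst ∈ setStar (Set.univ : Set B₁) Set.univ := by rw [hT]; trivial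
    exact this
  -- J₁ is contained in every *-product of nonzero ideals
  have key : ∀ X : Set (SDP B₁ B₂), IsStarProdOfNonzeroIdeals X → J₁ ⊆ X := by
    intro X hX
    induction hX with
    | ideal hI hne => exact claimA _ hI hne
    | star hX hY ihX ihY => exact hJ₁star.trans (setStar_mono' ihX ihY)
  have hwit : (⟨bstar u v, 0⟩ : SDP B₁ B₂) ∈ J₁ := rfl
  constructor
  · intro X hX hX0
    have : (⟨bstar u v, 0⟩ : SDP B₁ B₂) ∈ X := key X hX hwit
    rw [hX0] at this
    apply hbz
    have := Set.mem_singleton_iff.mp this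
    rw [hzero] at this
    exact congrArg SDP.fst this
  · rintro ⟨-, hall⟩
    rcases hall J₁ hJ₁ideal with h | h
    · rw [h] at hwit
      have := Set.mem_singleton_iff.mp hwit
      rw [hzero] at this
      exact hbz (congrArg SDP.fst this)
    · obtain ⟨a, x, hax⟩ := hα
      have ha0 : a ≠ 0 := by
        intro h'
        apply hax
        rw [h', h01, α.act_one]
      have : (⟨0, a⟩ : SDP B₁ B₂) ∈ J₁ := by rw [h]; trivial
      exact ha0 this
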